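/- Let v ≥ 2 and k ≥ 0 be integers and let u be a proper divisor of v (u divides v and u < v). Set d + 1 = (v + u − 1)(k+1), and let Λ be the cyclic subgroup of (ℝ/ℤ)^{d+1} generated by the element whose first (v−1)(k+1) coordinates all equal u/v and whose last u(k+1) coordinates all equal 1/v. Then Λ has δ-polynomial 1 + t^{k+1} + t^{2(k+1)} + ⋯ + t^{(v−1)(k+1)}. -/

import Mathlib

open scoped BigOperators

local instance : Fact ((0:ℝ) < 1) := ⟨one_pos⟩

noncomputable def fracR (x : AddCircle (1:ℝ)) : ℝ :=
  ((AddCircle.equivIco 1 0) x : ℝ)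

noncomputable def ht {ι : Type*} [Fintype ι] (x : ι → AddCircle (1:ℝ)) : ℝ :=
  ∑ i, fracR (x i)

/-- `Λ` has δ-polynomial `1 + t^step + t^(2*step) + ⋯ + t^((v-1)*step)` :
the height map is a bijection from `Λ` onto `{j*step : 0 ≤ j ≤ v-1}`. -/
def HasDeltaPoly {ι : Type*} [Fintype ι] (v step : ℕ)
    (Λ : Set (ι → AddCircle (1:ℝ))) : Prop :=
  Set.BijOn ht Λ {y : ℝ | ∃ j : ℕ, j < v ∧ y = (j : ℝ) * (step : ℝ)}

def NonPyramidal {ι : Type*} [Fintype ι] (Λ : Set (ι → AddCircle (1:ℝ))) : Prop :=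
  ∀ i : ι, ∃ x ∈ Λ, x i ≠ 0
lemma fracR_coe (x : ℝ) : fracR ((x : ℝ) : AddCircle (1:ℝ)) = Int.fract x := by
  unfold fracR
  rw [show ((x:ℝ) : AddCircle (1:ℝ)) = QuotientAddGroup.mk x from rfl,
    AddCircle.coe_equivIco_mk_apply]
  simp

lemma sum_if_fin (N A : ℕ) (hA : A ≤ N) (c1 c2 : ℝ) :
    ∑ i : Fin N, (if (i:ℕ) < A then c1 else c2) = A * c1 + (N - A : ℕ) * c2 := by
  rw [Fin.sum_univ_eq_sum_range (fun i => if i < A then c1 else c2)]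
  rw [Finset.sum_ite]
  have h1 : (Finset.range N).filter (fun i => i < A) = Finset.range A := by
    ext i; simp only [Finset.mem_filter, Finset.mem_range]; omega
  have h2 : (Finset.range N).filter (fun i => ¬ i < A) = Finset.Ico A N := by
    ext i; simp only [Finset.mem_filter, Finset.mem_range, Finset.mem_Ico]; omega
  rw [h1, h2, Finset.sum_const, Finset.sum_const, Finset.card_range, Nat.card_Ico]
  simp [mul_comm]

theorem stmt_4 (v u k : ℕ) (hv : 2 ≤ v) (hu : u ∣ v) (huv : u < v) :
    HasDeltaPoly v (k+1)
      ((AddSubgroup.zmultiples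
        (fun i : Fin ((v + u - 1)*(k+1)) =>
          if (i : ℕ) < (v-1)*(k+1) then (((u : ℝ) / (v:ℝ) : ℝ) : AddCircle (1:ℝ))
          else ((1 / (v:ℝ) : ℝ) : AddCircle (1:ℝ)))) :
        Set (Fin ((v + u - 1)*(k+1)) → AddCircle (1:ℝ))) := by
  have hu0 : 0 < u := by
    rcases Nat.eq_zero_or_pos u with h | h
    · subst h; obtain ⟨c, hc⟩ := hu; omega
    · exact h
  obtain ⟨m, hm⟩ := hu
  have hm2 : 2 ≤ m := by
    rcases Nat.lt_or_ge m 2 with h | h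
    · interval_cases m <;> omega
    · exact h
  have hv0 : 0 < v := by omega
  have hvR : (0:ℝ) < (v:ℝ) := by exact_mod_cast hv0
  set N := (v + u - 1)*(k+1) with hN
  set A := (v-1)*(k+1) with hA
  have hAle : A ≤ N := by
    apply Nat.mul_le_mul_right; omega
  set g : Fin N → AddCircle (1:ℝ) := (fun i : Fin N =>
          if (i : ℕ) < A then (((u : ℝ) / (v:ℝ) : ℝ) : AddCircle (1:ℝ))
          else ((1 / (v:ℝ) : ℝ) : AddCircle (1:ℝ))) with hg
  -- v • g = 0
  have hvg : (v:ℤ) • g = 0 := by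
    funext i
    simp only [Pi.smul_apply, Pi.zero_apply, hg]
    split_ifs with h
    · rw [← AddCircle.coe_zsmul]
      have : ((v:ℤ) • ((u:ℝ)/(v:ℝ)) : ℝ) = (u:ℝ) := by
        rw [zsmul_eq_mul]; push_cast; field_simp
      rw [this]
      exact (AddCircle.coe_eq_zero_iff (1:ℝ)).2 ⟨u, by simp⟩
    · rw [← AddCircle.coe_zsmul]
      have : ((v:ℤ) • ((1:ℝ)/(v:ℝ)) : ℝ) = (1:ℝ) := by
        rw [zsmul_eq_mul]; push_cast; field_simp
      rw [this]
      exact (AddCircle.coe_eq_zero_iff (1:ℝ)).2 ⟨1, by simp⟩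
  -- reduction mod v
  have hred : ∀ z : ℤ, z • g = (((z % (v:ℤ)).toNat : ℕ) : ℤ) • g := by
    intro z
    have h0 : 0 ≤ z % (v:ℤ) := Int.emod_nonneg z (by exact_mod_cast hv0.ne')
    rw [Int.toNat_of_nonneg h0]
    have hz : z = (v:ℤ) * (z / v) + z % v := (Int.mul_ediv_add_emod z v).symm
    calc z • g = ((v:ℤ) * (z / v) + z % v) • g := by rw [← hz]
      _ = (z / v) • ((v:ℤ) • g) + (z % (v:ℤ)) • g := by
          rw [add_zsmul, mul_comm, mul_zsmul]
      _ = (z % (v:ℤ)) • g := by rw [hvg, smul_zero, zero_add]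
  -- height formula
  have hht : ∀ n : ℕ, n < v → ht (((n:ℕ):ℤ) • g) =
      (((n*u)/v + (n*u)%v : ℕ) : ℝ) * (((k:ℕ)+1 : ℕ) : ℝ) := by
    intro n hn
    have e1 : ∀ i : Fin N, fracR (((n:ℤ) • g) i) =
        if (i:ℕ) < A then Int.fract (((n*u : ℕ):ℝ)/v) else Int.fract ((n:ℝ)/v) := by
      intro i
      simp only [Pi.smul_apply, hg]
      split_ifs with h
      · rw [← AddCircle.coe_zsmul, fracR_coe]; congr 1; rw [zsmul_eq_mul]; push_cast; ring
      · rw [← AddCircle.coe_zsmul, fracR_coe]; congr 1; rw [zsmul_eq_mul]; push_cast; ring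
    unfold ht
    rw [Finset.sum_congr rfl (fun i _ => e1 i), sum_if_fin N A hAle]
    have hNA : N - A = u*(k+1) := by
      rw [hN, hA, ← Nat.sub_mul]
      congr 1; omega
    rw [hNA]
    have hf2 : Int.fract ((n:ℝ)/v) = (n:ℝ)/v :=
      Int.fract_eq_self.2 ⟨by positivity, by rw [div_lt_one hvR]; exact_mod_cast hn⟩
    have hq := Nat.div_add_mod (n*u) v
    have hqR : ((n*u/v : ℕ):ℝ) * (v:ℝ) + ((n*u%v : ℕ):ℝ) = (n:ℝ)*(u:ℝ) := by
      have h := congrArg (Nat.cast : ℕ → ℝ) hq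
      push_cast at h
      linarith
    have hf1 : Int.fract (((n*u:ℕ):ℝ)/v) = ((n*u % v : ℕ):ℝ)/v := by
      have hsplit : ((n*u:ℕ):ℝ)/v = ((n*u/v : ℕ):ℝ) + ((n*u % v : ℕ):ℝ)/v := by
        field_simp
        linarith [hqR, (Nat.cast_mul (α := ℝ) n u)]
      rw [hsplit]
      have : ((n*u/v : ℕ):ℝ) = (((n*u/v : ℕ) : ℤ) : ℝ) := (Int.cast_natCast _).symm
      rw [this, Int.fract_intCast_add]
      exact Int.fract_eq_self.2 ⟨by positivity,
        by rw [div_lt_one hvR]; exact_mod_cast Nat.mod_lt _ hv0⟩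
    rw [hf1, hf2]
    have hvc : ((v-1:ℕ):ℝ) = (v:ℝ) - 1 := by
      push_cast [Nat.cast_sub (show 1 ≤ v by omega)]; ring
    rw [hA]
    push_cast [hvc]
    field_simp
    ring_nf
    nlinarith [hqR, hvR]
  -- the height index function
  set φ : ℕ → ℕ := fun n => (n*u)/v + (n*u)%v with hφdef
  have hphi_lt : ∀ n : ℕ, n < v → φ n < v := by
    intro n hn
    have hq : (n*u)/v < u := by
      rw [Nat.div_lt_iff_lt_mul hv0]
      calc n*u < v*u := (Nat.mul_lt_mul_right hu0).2 hn
        _ = u*v := mul_comm _ _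
    have hdvd : u ∣ (n*u) % v := (Nat.dvd_mod_iff ⟨m, hm⟩).2 ⟨n, (mul_comm n u)⟩
    obtain ⟨s, hs⟩ := hdvd
    have h1 : u + (n*u)%v ≤ v := by
      rw [hs, hm]
      have hsm : s + 1 ≤ m := by
        have : u*s < u*m := by rw [← hs, ← hm]; exact Nat.mod_lt _ hv0
        have := Nat.lt_of_mul_lt_mul_left this
        omega
      calc u + u*s = u*(s+1) := by ring
        _ ≤ u*m := Nat.mul_le_mul_left u hsm
    have h2 : φ n < u + (n*u)%v := Nat.add_lt_add_right hq _
    exact lt_of_lt_of_le h2 h1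
  have hphi_inj : ∀ n n' : ℕ, n < v → n' < v → φ n = φ n' → n = n' := by
    intro n n' hn hn' he
    have hq : (n*u)/v < u := by
      rw [Nat.div_lt_iff_lt_mul hv0]
      calc n*u < v*u := (Nat.mul_lt_mul_right hu0).2 hn
        _ = u*v := mul_comm _ _
    have hq' : (n'*u)/v < u := by
      rw [Nat.div_lt_iff_lt_mul hv0]
      calc n'*u < v*u := (Nat.mul_lt_mul_right hu0).2 hn'
        _ = u*v := mul_comm _ _
    obtain ⟨s, hs⟩ := (Nat.dvd_mod_iff ⟨m, hm⟩).2 (⟨n, (mul_comm n u)⟩ : u ∣ n*u)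
    obtain ⟨s', hs'⟩ := (Nat.dvd_mod_iff ⟨m, hm⟩).2 (⟨n', (mul_comm n' u)⟩ : u ∣ n'*u)
    have hmod : φ n % u = (n*u)/v := by
      simp only [hφdef, hs]
      rw [Nat.add_mul_mod_self_left, Nat.mod_eq_of_lt hq]
    have hmod' : φ n' % u = (n'*u)/v := by
      simp only [hφdef, hs']
      rw [Nat.add_mul_mod_self_left, Nat.mod_eq_of_lt hq']
    have hqeq : (n*u)/v = (n'*u)/v := by rw [← hmod, ← hmod', he]
    have hreq : (n*u)%v = (n'*u)%v := by
      have := he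
      simp only [hφdef] at this
      omega
    have hmul : n*u = n'*u := by
      have h1 := Nat.div_add_mod (n*u) v
      have h2 := Nat.div_add_mod (n'*u) v
      rw [hqeq, hreq] at h1
      omega
    exact Nat.eq_of_mul_eq_mul_right hu0 hmul
  have hphi_surj : ∀ j : ℕ, j < v → ∃ n : ℕ, n < v ∧ φ n = j := by
    intro j hj
    set a := j % u with hadef
    set b := j / u with hbdef
    have ha : a < u := Nat.mod_lt _ hu0
    have hb : b < m := by
      rw [hbdef, Nat.div_lt_iff_lt_mul hu0]
      calc j < v := hj
        _ = u*m := hm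
        _ = m*u := mul_comm _ _
    refine ⟨a*m + b, ?_, ?_⟩
    · calc a*m + b < a*m + m := Nat.add_lt_add_left hb _
        _ = (a+1)*m := by ring
        _ ≤ u*m := Nat.mul_le_mul_right m ha
        _ = v := hm.symm
    · have key : (a*m + b)*u = b*u + a*v := by rw [hm]; ring
      have hbu : b*u < v := by
        rw [hm, mul_comm u m]
        exact (Nat.mul_lt_mul_right hu0).2 hb
      have hdiv : ((a*m+b)*u)/v = a := by
        rw [key, Nat.add_mul_div_right _ _ hv0, Nat.div_eq_of_lt hbu, zero_add]
      have hmod : ((a*m+b)*u)%v = b*u := by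
        rw [key, Nat.add_mul_mod_self_right, Nat.mod_eq_of_lt hbu]
      simp only [hφdef, hdiv, hmod]
      rw [hadef, hbdef]
      exact Nat.mod_add_div' j u
  -- assemble
  refine ⟨?_, ?_, ?_⟩
  · -- MapsTo
    intro x hx
    rw [SetLike.mem_coe, AddSubgroup.mem_zmultiples_iff] at hx
    obtain ⟨z, hz⟩ := hx
    set n := (z % (v:ℤ)).toNat with hndef
    have hn : n < v := by
      have h1 : z % (v:ℤ) < v := Int.emod_lt_of_pos z (by exact_mod_cast hv0)
      have h0 : 0 ≤ z % (v:ℤ) := Int.emod_nonneg z (by exact_mod_cast hv0.ne')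
      omega
    refine ⟨φ n, hphi_lt n hn, ?_⟩
    rw [← hz, hred z, hht n hn]
  · -- InjOn
    intro x hx x' hx' hhteq
    rw [SetLike.mem_coe, AddSubgroup.mem_zmultiples_iff] at hx hx'
    obtain ⟨z, hz⟩ := hx
    obtain ⟨z', hz'⟩ := hx'
    set n := (z % (v:ℤ)).toNat with hndef
    set n' := (z' % (v:ℤ)).toNat with hn'def
    have hn : n < v := by
      have h1 : z % (v:ℤ) < v := Int.emod_lt_of_pos z (by exact_mod_cast hv0)
      have h0 : 0 ≤ z % (v:ℤ) := Int.emod_nonneg z (by exact_mod_cast hv0.ne')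
      omega
    have hn' : n' < v := by
      have h1 : z' % (v:ℤ) < v := Int.emod_lt_of_pos z' (by exact_mod_cast hv0)
      have h0 : 0 ≤ z' % (v:ℤ) := Int.emod_nonneg z' (by exact_mod_cast hv0.ne')
      omega
    have hx1 : x = ((n:ℕ):ℤ) • g := by rw [← hz, hred z]
    have hx2 : x' = ((n':ℕ):ℤ) • g := by rw [← hz', hred z']
    rw [hx1, hx2, hht n hn, hht n' hn'] at hhteq
    have hk0 : (((k+1 : ℕ)):ℝ) ≠ 0 := by positivity
    have : ((φ n : ℕ):ℝ) = ((φ n' : ℕ):ℝ) := mul_right_cancel₀ hk0 hhteq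
    have : φ n = φ n' := by exact_mod_cast this
    rw [hx1, hx2, hphi_inj n n' hn hn' this]
  · -- SurjOn
    intro y hy
    obtain ⟨j, hj, rfl⟩ := hy
    obtain ⟨n, hn, hφn⟩ := hphi_surj j hj
    refine ⟨((n:ℕ):ℤ) • g, ?_, ?_⟩
    · exact AddSubgroup.zsmul_mem _ (AddSubgroup.mem_zmultiples g) (n:ℤ)
    · rw [hht n hn]
      simp only [hφdef] at hφn
      rw [hφn]
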